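/- (Hodge decomposition) If ∂_r ∘ ∂_{r+1} = 0, then C_r decomposes as the orthogonal direct sum im(∂_{r+1}) ⊕ im(∂_r†) ⊕ ker(Δ_r), where Δ_r = ∂_{r+1}∂_{r+1}† + ∂_r†∂_r. -/

import Mathlib

set_option maxHeartbeats 1000000


open LinearMap

/-- (Hodge decomposition) If `∂_r ∘ ∂_{r+1} = 0`, then
`C_r = im(∂_{r+1}) ⊕ im(∂_r†) ⊕ ker(Δ_r)` as an orthogonal direct sum, where
`Δ_r = ∂_{r+1}∂_{r+1}† + ∂_r†∂_r`. -/
theorem hodge_decomposition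
    {Crm Cr Crp : Type*}
    [NormedAddCommGroup Crm] [InnerProductSpace ℝ Crm] [FiniteDimensional ℝ Crm]
    [NormedAddCommGroup Cr] [InnerProductSpace ℝ Cr] [FiniteDimensional ℝ Cr]
    [NormedAddCommGroup Crp] [InnerProductSpace ℝ Crp] [FiniteDimensional ℝ Crp]
    (dr : Cr →ₗ[ℝ] Crm) (drp : Crp →ₗ[ℝ] Cr)
    (h : dr ∘ₗ drp = 0) :
    (LinearMap.range drp ⊔ LinearMap.range (adjoint dr) ⊔
        ker (drp ∘ₗ (adjoint drp) + (adjoint dr) ∘ₗ dr) = ⊤) ∧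
      LinearMap.range drp ≤ (LinearMap.range (adjoint dr))ᗮ ∧
      LinearMap.range drp ≤ (ker (drp ∘ₗ (adjoint drp) + (adjoint dr) ∘ₗ dr))ᗮ ∧
      LinearMap.range (adjoint dr) ≤
        (ker (drp ∘ₗ (adjoint drp) + (adjoint dr) ∘ₗ dr))ᗮ := by
  have hcomp : ∀ x, dr (drp x) = 0 := fun x => by simpa using LinearMap.ext_iff.mp h x
  set D := drp ∘ₗ (adjoint drp) + (adjoint dr) ∘ₗ dr with hD
  -- characterize the kernel of the Laplacian
  have hker : ∀ x, x ∈ ker D ↔ adjoint drp x = 0 ∧ dr x = 0 := by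
    intro x
    constructor
    · intro hx
      have h0 : inner ℝ (D x) x = (0 : ℝ) := by
        rw [mem_ker.mp hx]; simp
      have hexp : inner ℝ (D x) x =
          ‖adjoint drp x‖ ^ 2 + ‖dr x‖ ^ 2 := by
        simp only [hD, LinearMap.add_apply, comp_apply, inner_add_left]
        rw [adjoint_inner_left, ← adjoint_inner_right drp,
          real_inner_self_eq_norm_sq, real_inner_self_eq_norm_sq]
      have h1 : ‖adjoint drp x‖ ^ 2 + ‖dr x‖ ^ 2 = 0 := by
        rw [← hexp, h0]
      have h2 : ‖adjoint drp x‖ ^ 2 = 0 ∧ ‖dr x‖ ^ 2 = 0 := by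
        constructor <;> nlinarith [sq_nonneg ‖adjoint drp x‖, sq_nonneg ‖dr x‖]
      constructor
      · simpa using h2.1
      · simpa using h2.2
    · rintro ⟨h1, h2⟩
      simp [hD, mem_ker, h1, h2]
  refine ⟨?_, ?_, ?_, ?_⟩
  · -- totality
    have hkerD : ker D = (LinearMap.range drp ⊔ LinearMap.range (adjoint dr))ᗮ := by
      ext x
      rw [hker, Submodule.mem_orthogonal]
      constructor
      · rintro ⟨h1, h2⟩ u hu
        rw [Submodule.mem_sup] at hu
        obtain ⟨y, hy, z, hz, rfl⟩ := hu
        obtain ⟨a, rfl⟩ := hy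
        obtain ⟨b, rfl⟩ := hz
        rw [inner_add_left, ← adjoint_inner_right drp, adjoint_inner_left, h1, h2]
        simp
      · intro hall
        constructor
        · have := hall (drp (adjoint drp x))
            (Submodule.mem_sup_left (LinearMap.mem_range_self _ _))
          rw [← adjoint_inner_right drp, real_inner_self_eq_norm_sq] at this
          simpa using this
        · have := hall (adjoint dr (dr x))
            (Submodule.mem_sup_right (LinearMap.mem_range_self _ _))
          rw [adjoint_inner_left, real_inner_self_eq_norm_sq] at this
          simpa using this
    rw [hkerD]
    exact Submodule.sup_orthogonal_of_hasOrthogonalProjection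
  · -- range drp ⊥ range (adjoint dr)
    rintro _ ⟨a, rfl⟩
    rw [Submodule.mem_orthogonal]
    rintro _ ⟨b, rfl⟩
    rw [adjoint_inner_left, hcomp]
    simp
  · -- range drp ⊥ ker D
    rintro _ ⟨a, rfl⟩
    rw [Submodule.mem_orthogonal]
    intro x hx
    rw [← adjoint_inner_left drp, (hker x).mp hx |>.1]
    simp
  · -- range (adjoint dr) ⊥ ker D
    rintro _ ⟨b, rfl⟩
    rw [Submodule.mem_orthogonal]
    intro x hx
    rw [adjoint_inner_right, (hker x).mp hx |>.2]
    simp
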